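/- For every m ∈ ℕ and every s ∈ ℕ, the product ∏_{k=1}^{m} (1 + exp(2πi·s/2^k)) over the complex numbers equals 2^m if 2^m divides s, and equals 0 otherwise. -/

import Mathlib

open scoped BigOperators

lemma key_exp (m t : ℕ) :
    Complex.exp (2 * Real.pi * Complex.I * (2 ^ m * t : ℕ) / 2 ^ (m + 1)) = (-1 : ℂ) ^ t := by
  have h2 : ((2 : ℂ) ^ (m + 1)) ≠ 0 := pow_ne_zero _ two_ne_zero
  have : (2 * Real.pi * Complex.I * (2 ^ m * t : ℕ) / 2 ^ (m + 1) : ℂ)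
      = t * (Real.pi * Complex.I) := by
    push_cast
    field_simp
    ring
  rw [this, Complex.exp_nat_mul, Complex.exp_pi_mul_I]

/-- `∏_{k=1}^{m} (1 + e^{2πi s / 2^k}) = 2^m` if `2^m ∣ s`, and `0` otherwise. -/
theorem stmt_1 (m s : ℕ) :
    ∏ k ∈ Finset.Icc 1 m,
        (1 + Complex.exp (2 * Real.pi * Complex.I * s / 2 ^ k))
      = if 2 ^ m ∣ s then (2 : ℂ) ^ m else 0 := by
  induction m with
  | zero => simp
  | succ m ih =>
    rw [Finset.prod_Icc_succ_top (Nat.le_add_left 1 m), ih]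
    by_cases h : 2 ^ m ∣ s
    · obtain ⟨t, rfl⟩ := h
      rw [if_pos ⟨t, rfl⟩, key_exp]
      by_cases ht : 2 ∣ t
      · have : 2 ^ (m + 1) ∣ 2 ^ m * t := by
          obtain ⟨u, rfl⟩ := ht; ring_nf; exact ⟨u, by ring⟩
        rw [if_pos this]
        obtain ⟨u, rfl⟩ := ht
        rw [pow_mul]
        norm_num [pow_succ]
      · have : ¬ 2 ^ (m + 1) ∣ 2 ^ m * t := by
          intro ⟨u, hu⟩
          apply ht
          have h3 : 2 ^ m * t = 2 ^ m * (2 * u) := by rw [hu]; ring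
          exact ⟨u, Nat.eq_of_mul_eq_mul_left ((Nat.pow_pos (n := m) two_pos)) h3⟩
        rw [if_neg this]
        rw [Odd.neg_one_pow (Nat.odd_iff.mpr (by omega))]
        ring
    · have h' : ¬ 2 ^ (m + 1) ∣ s := fun hd => h (dvd_trans (pow_dvd_pow 2 (Nat.le_succ m)) hd)
      rw [if_neg h, if_neg h', zero_mul]
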